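/- Tightness of the dual upper bound in expectation: for every 0 ≤ n ≤ N, the infimum of the set { 𝔼[Ũ_n(M)] : M an 𝓕-martingale } equals 𝔼[Y*_n], and the infimum is attained by the Doob martingale M* of the Snell envelope. -/

import Mathlib

open MeasureTheory Filter

lemma integrable_sup'_aux {Ω : Type*} {m0 : MeasurableSpace Ω} {μ : Measure Ω}
    (s : Finset ℕ) (hs : s.Nonempty) (f : ℕ → Ω → ℝ)
    (hf : ∀ i ∈ s, Integrable (f i) μ) :
    Integrable (fun ω => s.sup' hs (fun i => f i ω)) μ := by
  induction hs using Finset.Nonempty.cons_induction with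
  | singleton i => simpa using hf i (by simp)
  | cons i s hi hs ih =>
    simp only [Finset.sup'_cons hs]
    exact (hf i (Finset.mem_cons_self i s)).sup
      (ih fun j hj => hf j (Finset.mem_cons.2 (Or.inr hj)))

lemma sup'_add_const (s : Finset ℕ) (hs : s.Nonempty) (f : ℕ → ℝ) (c : ℝ) :
    s.sup' hs (fun i => f i + c) = s.sup' hs f + c :=
  (Finset.comp_sup'_eq_sup'_comp hs (fun x => x + c)
    (fun x y => by exact (max_add_add_right x y c).symm)).symm

/-- A finite-horizon martingale with respect to the filtration `ℱ` up to time `N`: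
an adapted, integrable process with the one-step martingale property. -/
def IsFinMartingale {Ω : Type*} {m0 : MeasurableSpace Ω} (μ : Measure Ω)
    (ℱ : Filtration ℕ m0) (N : ℕ) (M : ℕ → Ω → ℝ) : Prop :=
  (∀ n, n ≤ N → StronglyMeasurable[ℱ n] (M n)) ∧
  (∀ n, n ≤ N → Integrable (M n) μ) ∧
  ∀ n, n < N → μ[M (n + 1)|ℱ n] =ᵐ[μ] M n

/-- Tightness of the dual upper bound in expectation: for every `n ≤ N`,
`𝔼[Y n]` is the least element of the set `{𝔼[Ũ_n(M)] : M a martingale}`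
(so the infimum equals `𝔼[Y n]` and is attained), and it is attained by the
Doob martingale `Mstar` of the Snell envelope. -/
theorem dual_upper_bound_tight
    {Ω : Type*} {m0 : MeasurableSpace Ω} {μ : Measure Ω} [IsProbabilityMeasure μ]
    (N : ℕ) (hN : 1 ≤ N) (ℱ : Filtration ℕ m0)
    (G : ℕ → Ω → ℝ) (hGadapted : Adapted ℱ G) (hGint : ∀ n, Integrable (G n) μ)
    (Y : ℕ → Ω → ℝ)
    (hYN : ∀ ω, Y N ω = G N ω)
    (hYrec : ∀ n, n < N → ∀ ω, Y n ω = max (G n ω) ((μ[Y (n + 1)|ℱ n]) ω))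
    (Mstar : ℕ → Ω → ℝ)
    (hMstar : ∀ n ω, Mstar n ω = ∑ m ∈ Finset.Icc 1 n, (Y m ω - (μ[Y m|ℱ (m - 1)]) ω))
    (n : ℕ) (hn : n ≤ N) :
    IsLeast {x : ℝ | ∃ M : ℕ → Ω → ℝ, IsFinMartingale μ ℱ N M ∧
        x = ∫ ω, (Finset.Icc n N).sup' (Finset.nonempty_Icc.mpr hn)
              (fun m => G m ω - M m ω + M n ω) ∂μ}
      (∫ ω, Y n ω ∂μ) ∧
    IsFinMartingale μ ℱ N Mstar ∧
    ∫ ω, (Finset.Icc n N).sup' (Finset.nonempty_Icc.mpr hn)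
        (fun m => G m ω - Mstar m ω + Mstar n ω) ∂μ = ∫ ω, Y n ω ∂μ := by
  -- Step 1: regularity of the Snell envelope Y
  have hYkey : ∀ k p, p + k = N → StronglyMeasurable[ℱ p] (Y p) ∧ Integrable (Y p) μ := by
    intro k
    induction k with
    | zero =>
      intro p hp
      have hpN : p = N := by omega
      subst hpN
      have hYG : Y p = G p := funext hYN
      rw [hYG]
      exact ⟨(hGadapted p).stronglyMeasurable, hGint p⟩
    | succ k ih =>
      intro p hp
      have hpN : p < N := by omega
      have hfun : Y p = fun ω => max (G p ω) ((μ[Y (p + 1)|ℱ p]) ω) :=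
        funext (hYrec p hpN)
      constructor
      · rw [hfun]
        exact @StronglyMeasurable.sup Ω ℝ (G p) (μ[Y (p + 1)|ℱ p]) (ℱ p) _ _ _
          (hGadapted p).stronglyMeasurable stronglyMeasurable_condExp
      · rw [hfun]
        exact (hGint p).sup integrable_condExp
  have hYmeas : ∀ p, p ≤ N → StronglyMeasurable[ℱ p] (Y p) :=
    fun p hp => (hYkey (N - p) p (by omega)).1
  have hYint : ∀ p, p ≤ N → Integrable (Y p) μ :=
    fun p hp => (hYkey (N - p) p (by omega)).2
  -- Step 2: Mstar one-step decomposition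
  have hMstep : ∀ p, Mstar (p + 1) = fun ω => Mstar p ω + (Y (p + 1) ω - (μ[Y (p + 1)|ℱ p]) ω) := by
    intro p
    funext ω
    rw [hMstar, hMstar, ← Finset.insert_Icc_right_eq_Icc_add_one (by omega),
      Finset.sum_insert (by simp)]
    simp [add_comm]
  -- Step 3: Mstar is a martingale
  have hMmeas : ∀ p, p ≤ N → StronglyMeasurable[ℱ p] (Mstar p) := by
    intro p hp
    have : Mstar p = fun ω => ∑ m ∈ Finset.Icc 1 p, (Y m ω - (μ[Y m|ℱ (m - 1)]) ω) :=
      funext (hMstar p)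
    rw [this]
    apply Finset.stronglyMeasurable_fun_sum
    intro m hm
    rw [Finset.mem_Icc] at hm
    exact ((hYmeas m (by omega)).mono (ℱ.mono hm.2)).sub
      (stronglyMeasurable_condExp.mono (ℱ.mono (by omega)))
  have hMint : ∀ p, p ≤ N → Integrable (Mstar p) μ := by
    intro p hp
    have : Mstar p = fun ω => ∑ m ∈ Finset.Icc 1 p, (Y m ω - (μ[Y m|ℱ (m - 1)]) ω) :=
      funext (hMstar p)
    rw [this]
    apply integrable_finset_sum
    intro m hm
    rw [Finset.mem_Icc] at hm
    exact (hYint m (by omega)).sub integrable_condExp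
  have hMmart : IsFinMartingale μ ℱ N Mstar := by
    refine ⟨hMmeas, hMint, ?_⟩
    intro p hp
    have heq : Mstar (p + 1) = Mstar p + (Y (p + 1) - μ[Y (p + 1)|ℱ p]) := by
      rw [hMstep p]; rfl
    rw [heq]
    have h1 : μ[Mstar p + (Y (p + 1) - μ[Y (p + 1)|ℱ p])|ℱ p]
        =ᵐ[μ] μ[Mstar p|ℱ p] + μ[Y (p + 1) - μ[Y (p + 1)|ℱ p]|ℱ p] :=
      condExp_add (hMint p (by omega)) ((hYint (p + 1) (by omega)).sub integrable_condExp) _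
    have h2 : μ[Y (p + 1) - μ[Y (p + 1)|ℱ p]|ℱ p]
        =ᵐ[μ] μ[Y (p + 1)|ℱ p] - μ[μ[Y (p + 1)|ℱ p]|ℱ p] :=
      condExp_sub (hYint (p + 1) (by omega)) integrable_condExp _
    have h3 : μ[Mstar p|ℱ p] = Mstar p :=
      condExp_of_stronglyMeasurable (ℱ.le p) (hMmeas p (by omega)) (hMint p (by omega))
    have h4 : μ[μ[Y (p + 1)|ℱ p]|ℱ p] = μ[Y (p + 1)|ℱ p] :=
      condExp_of_stronglyMeasurable (ℱ.le p) stronglyMeasurable_condExp integrable_condExp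
    refine h1.trans ?_
    refine (EventuallyEq.add (EventuallyEq.refl _ _) h2).trans ?_
    rw [h3, h4]
    filter_upwards with ω
    simp
  -- Step 4: lower bound for any martingale (conditional version)
  have lower : ∀ M : ℕ → Ω → ℝ, IsFinMartingale μ ℱ N M →
      ∀ k p (hpk : p + k = N),
      (fun ω => Y p ω - M p ω) ≤ᵐ[μ]
        μ[fun ω => (Finset.Icc p N).sup' (Finset.nonempty_Icc.mpr (by omega))
            (fun m => G m ω - M m ω)|ℱ p] := by
    intro M hM
    obtain ⟨hMm, hMi, hMc⟩ := hM
    intro k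
    induction k with
    | zero =>
      intro p hpk
      have hpN : p = N := by omega
      subst hpN
      have hfun : (fun ω => (Finset.Icc p p).sup' (Finset.nonempty_Icc.mpr (by omega))
          (fun m => G m ω - M m ω)) = fun ω => Y p ω - M p ω := by
        funext ω
        simp [Finset.Icc_self, hYN ω]
      rw [hfun]
      have h0 : μ[fun ω => Y p ω - M p ω|ℱ p] = fun ω => Y p ω - M p ω :=
        condExp_of_stronglyMeasurable (ℱ.le p)
          ((hYmeas p le_rfl).sub (hMm p le_rfl)) ((hYint p le_rfl).sub (hMi p le_rfl))
      exact Eventually.of_forall fun ω => (congrFun h0 ω).symm.le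
    | succ k ih =>
      intro p hpk
      have hpN : p < N := by omega
      have hp1 : p + 1 ≤ N := by omega
      -- abbreviations
      set Sp : Ω → ℝ := fun ω => (Finset.Icc p N).sup' (Finset.nonempty_Icc.mpr (by omega))
        (fun m => G m ω - M m ω) with hSp
      set Sq : Ω → ℝ := fun ω => (Finset.Icc (p + 1) N).sup' (Finset.nonempty_Icc.mpr hp1)
        (fun m => G m ω - M m ω) with hSq
      have hSpmax : ∀ ω, Sp ω = max (G p ω - M p ω) (Sq ω) := by
        intro ω
        apply le_antisymm
        · apply Finset.sup'_le
          intro m hm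
          rw [Finset.mem_Icc] at hm
          rcases eq_or_lt_of_le hm.1 with h | h
          · subst h; exact le_max_left _ _
          · exact le_trans (Finset.le_sup' (fun m => G m ω - M m ω)
              (Finset.mem_Icc.mpr ⟨h, hm.2⟩)) (le_max_right _ _)
        · apply max_le
          · exact Finset.le_sup' (fun m => G m ω - M m ω)
              (Finset.mem_Icc.mpr ⟨le_rfl, by omega⟩)
          · apply Finset.sup'_le
            intro m hm
            rw [Finset.mem_Icc] at hm
            exact Finset.le_sup' (fun m => G m ω - M m ω)
              (Finset.mem_Icc.mpr ⟨by omega, hm.2⟩)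
      have hSpint : Integrable Sp μ :=
        integrable_sup'_aux _ _ (fun m => fun ω => G m ω - M m ω)
          (fun i hi => (hGint i).sub (hMi i (Finset.mem_Icc.mp hi).2))
      have hSqint : Integrable Sq μ :=
        integrable_sup'_aux _ _ (fun m => fun ω => G m ω - M m ω)
          (fun i hi => (hGint i).sub (hMi i (Finset.mem_Icc.mp hi).2))
      -- conditional expectation bounds
      have hb1 : (fun ω => G p ω - M p ω) ≤ᵐ[μ] μ[Sp|ℱ p] := by
        have h0 : μ[fun ω => G p ω - M p ω|ℱ p] = fun ω => G p ω - M p ω :=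
          condExp_of_stronglyMeasurable (ℱ.le p)
            ((hGadapted p).stronglyMeasurable.sub (hMm p (by omega))) ((hGint p).sub (hMi p (by omega)))
        calc (fun ω => G p ω - M p ω) = μ[fun ω => G p ω - M p ω|ℱ p] := h0.symm
          _ ≤ᵐ[μ] μ[Sp|ℱ p] := condExp_mono ((hGint p).sub (hMi p (by omega))) hSpint
            (Eventually.of_forall fun ω => by rw [hSpmax ω]; exact le_max_left _ _)
      have hb2 : μ[Sq|ℱ p] ≤ᵐ[μ] μ[Sp|ℱ p] :=
        condExp_mono hSqint hSpint
          (Eventually.of_forall fun ω => by rw [hSpmax ω]; exact le_max_right _ _)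
      have hb3 : (fun ω => (μ[Y (p + 1)|ℱ p]) ω - M p ω) ≤ᵐ[μ] μ[Sq|ℱ p] := by
        have hIH := ih (p + 1) (by omega)
        have e1 : μ[Sq|ℱ p] =ᵐ[μ] μ[μ[Sq|ℱ (p + 1)]|ℱ p] :=
          (condExp_condExp_of_le (ℱ.mono (by omega : p ≤ p + 1)) (ℱ.le (p + 1))).symm
        have e2 : μ[fun ω => Y (p + 1) ω - M (p + 1) ω|ℱ p] ≤ᵐ[μ] μ[μ[Sq|ℱ (p + 1)]|ℱ p] :=
          condExp_mono ((hYint (p + 1) hp1).sub (hMi (p + 1) hp1)) integrable_condExp hIH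
        have e3 : μ[fun ω => Y (p + 1) ω - M (p + 1) ω|ℱ p]
            =ᵐ[μ] μ[Y (p + 1)|ℱ p] - μ[M (p + 1)|ℱ p] :=
          condExp_sub (hYint (p + 1) hp1) (hMi (p + 1) hp1) _
        have e4 : μ[M (p + 1)|ℱ p] =ᵐ[μ] M p := hMc p hpN
        calc (fun ω => (μ[Y (p + 1)|ℱ p]) ω - M p ω)
            =ᵐ[μ] μ[Y (p + 1)|ℱ p] - μ[M (p + 1)|ℱ p] := by
              filter_upwards [e4] with ω h4
              simp [h4]
          _ =ᵐ[μ] μ[fun ω => Y (p + 1) ω - M (p + 1) ω|ℱ p] := e3.symm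
          _ ≤ᵐ[μ] μ[μ[Sq|ℱ (p + 1)]|ℱ p] := e2
          _ =ᵐ[μ] μ[Sq|ℱ p] := e1.symm
      filter_upwards [hb1, hb2, hb3] with ω h1 h2 h3
      rw [hYrec p hpN ω]
      have : max (G p ω) ((μ[Y (p + 1)|ℱ p]) ω) - M p ω
          = max (G p ω - M p ω) ((μ[Y (p + 1)|ℱ p]) ω - M p ω) := by
        rw [max_sub_sub_right]
      rw [this]
      exact max_le h1 (le_trans h3 h2)
  -- Step 5: lower bound on expectations
  have lowerE : ∀ M : ℕ → Ω → ℝ, IsFinMartingale μ ℱ N M →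
      ∫ ω, Y n ω ∂μ ≤ ∫ ω, (Finset.Icc n N).sup' (Finset.nonempty_Icc.mpr hn)
        (fun m => G m ω - M m ω + M n ω) ∂μ := by
    intro M hM
    have hSint : Integrable (fun ω => (Finset.Icc n N).sup' (Finset.nonempty_Icc.mpr hn)
        (fun m => G m ω - M m ω)) μ :=
      integrable_sup'_aux _ _ (fun m => fun ω => G m ω - M m ω)
        (fun i hi => (hGint i).sub (hM.2.1 i (Finset.mem_Icc.mp hi).2))
    have hsplit : ∀ ω, (Finset.Icc n N).sup' (Finset.nonempty_Icc.mpr hn)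
        (fun m => G m ω - M m ω + M n ω)
        = (Finset.Icc n N).sup' (Finset.nonempty_Icc.mpr hn) (fun m => G m ω - M m ω) + M n ω :=
      fun ω => sup'_add_const _ _ _ _
    have hle := lower M hM (N - n) n (by omega)
    have h1 : ∫ ω, (Y n ω - M n ω) ∂μ ≤ ∫ ω, (Finset.Icc n N).sup' (Finset.nonempty_Icc.mpr hn)
        (fun m => G m ω - M m ω) ∂μ := by
      calc ∫ ω, (Y n ω - M n ω) ∂μ
          ≤ ∫ ω, (μ[fun ω => (Finset.Icc n N).sup' (Finset.nonempty_Icc.mpr (by omega))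
              (fun m => G m ω - M m ω)|ℱ n]) ω ∂μ :=
            integral_mono_ae ((hYint n hn).sub (hM.2.1 n hn)) integrable_condExp hle
        _ = _ := integral_condExp (ℱ.le n)
    have hsub : ∫ ω, (Y n ω - M n ω) ∂μ = ∫ ω, Y n ω ∂μ - ∫ ω, M n ω ∂μ :=
      integral_sub (hYint n hn) (hM.2.1 n hn)
    have heq : (fun ω => (Finset.Icc n N).sup' (Finset.nonempty_Icc.mpr hn)
        (fun m => G m ω - M m ω + M n ω))
        = fun ω => (Finset.Icc n N).sup' (Finset.nonempty_Icc.mpr hn)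
            (fun m => G m ω - M m ω) + M n ω := funext hsplit
    have hadd : ∫ ω, ((Finset.Icc n N).sup' (Finset.nonempty_Icc.mpr hn)
        (fun m => G m ω - M m ω) + M n ω) ∂μ
        = (∫ ω, (Finset.Icc n N).sup' (Finset.nonempty_Icc.mpr hn)
            (fun m => G m ω - M m ω) ∂μ) + ∫ ω, M n ω ∂μ :=
      integral_add hSint (hM.2.1 n hn)
    calc ∫ ω, Y n ω ∂μ
        ≤ ∫ ω, ((Finset.Icc n N).sup' (Finset.nonempty_Icc.mpr hn)
            (fun m => G m ω - M m ω) + M n ω) ∂μ := by rw [hadd]; linarith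
      _ = _ := by rw [heq]
  -- Step 6: pointwise upper bound for Mstar
  have hup : ∀ ω m, n ≤ m → m ≤ N → Y m ω ≤ Y n ω + (Mstar m ω - Mstar n ω) := by
    intro ω m hm
    induction m, hm using Nat.le_induction with
    | base => intro _; simp
    | succ m hm ih =>
      intro hm1
      have hmN : m < N := by omega
      have hstep := congrFun (hMstep m) ω
      have hle : (μ[Y (m + 1)|ℱ m]) ω ≤ Y m ω := by
        rw [hYrec m hmN ω]; exact le_max_right _ _
      have := ih (by omega)
      have h2 : Y (m + 1) ω = Mstar (m + 1) ω - Mstar m ω + (μ[Y (m + 1)|ℱ m]) ω := by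
        rw [hstep]; ring
      linarith
  have hGleY : ∀ m, m ≤ N → ∀ ω, G m ω ≤ Y m ω := by
    intro m hm ω
    rcases eq_or_lt_of_le hm with h | h
    · subst h; rw [hYN ω]
    · rw [hYrec m h ω]; exact le_max_left _ _
  have hupS : ∀ ω, (Finset.Icc n N).sup' (Finset.nonempty_Icc.mpr hn)
      (fun m => G m ω - Mstar m ω + Mstar n ω) ≤ Y n ω := by
    intro ω
    apply Finset.sup'_le
    intro m hm
    rw [Finset.mem_Icc] at hm
    have h1 := hGleY m hm.2 ω
    have h2 := hup ω m hm.1 hm.2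
    linarith
  have hSMint : Integrable (fun ω => (Finset.Icc n N).sup' (Finset.nonempty_Icc.mpr hn)
      (fun m => G m ω - Mstar m ω + Mstar n ω)) μ :=
    integrable_sup'_aux _ _ (fun m => fun ω => G m ω - Mstar m ω + Mstar n ω)
      (fun i hi => (((hGint i).sub (hMint i (Finset.mem_Icc.mp hi).2)).add (hMint n hn)))
  have hfinal : ∫ ω, (Finset.Icc n N).sup' (Finset.nonempty_Icc.mpr hn)
      (fun m => G m ω - Mstar m ω + Mstar n ω) ∂μ = ∫ ω, Y n ω ∂μ := by
    apply le_antisymm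
    · exact integral_mono hSMint (hYint n hn) hupS
    · exact lowerE Mstar hMmart
  refine ⟨⟨⟨Mstar, hMmart, hfinal.symm⟩, ?_⟩, hMmart, hfinal⟩
  rintro x ⟨M, hM, rfl⟩
  exact lowerE M hM
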